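/- If every graph in a hereditary class F with fewer vertices-plus-edges than G admits a dynamic coloring from every ℓ-list assignment, G ∈ F is not dynamically ℓ-choosable, and ℓ ≥ 3, then G has minimum degree at least 2. -/

import Mathlib

open Finset

open scoped Classical in
noncomputable def deg {V : Type*} [Fintype V] (G : SimpleGraph V) (v : V) : ℕ :=
  (Finset.univ.filter (fun u => G.Adj v u)).card

def IsProper {V : Type*} (G : SimpleGraph V) (c : V → ℕ) : Prop :=
  ∀ u v, G.Adj u v → c u ≠ c v

def IsDynamic {V : Type*} [Fintype V] (G : SimpleGraph V) (c : V → ℕ) : Prop :=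
  IsProper G c ∧ ∀ v, 2 ≤ deg G v → ∃ a b, G.Adj v a ∧ G.Adj v b ∧ c a ≠ c b

noncomputable def chrom {V : Type*} (G : SimpleGraph V) : ℕ :=
  sInf {n | ∃ c : V → ℕ, (∀ v, c v < n) ∧ IsProper G c}

noncomputable def dynChrom {V : Type*} [Fintype V] (G : SimpleGraph V) : ℕ :=
  sInf {n | ∃ c : V → ℕ, (∀ v, c v < n) ∧ IsDynamic G c}

def subdiv {V : Type*} (G : SimpleGraph V) : SimpleGraph (V ⊕ G.edgeSet) where
  Adj x y :=
    match x, y with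
    | Sum.inl u, Sum.inr e => u ∈ (e : Sym2 V)
    | Sum.inr e, Sum.inl u => u ∈ (e : Sym2 V)
    | _, _ => False
  symm := ⟨by rintro (u | e) (v | f) h <;> first | exact h | exact h.elim⟩
  loopless := ⟨by rintro (u | e) h <;> exact h⟩

noncomputable instance {V : Type*} [Fintype V] (G : SimpleGraph V) : Fintype G.edgeSet :=
  Fintype.ofFinite _

def Choosable {V : Type*} (G : SimpleGraph V) (ℓ : ℕ) : Prop :=
  ∀ L : V → Finset ℕ, (∀ v, (L v).card = ℓ) →
    ∃ c : V → ℕ, (∀ v, c v ∈ L v) ∧ IsProper G c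

def DynChoosable {V : Type*} [Fintype V] (G : SimpleGraph V) (ℓ : ℕ) : Prop :=
  ∀ L : V → Finset ℕ, (∀ v, (L v).card = ℓ) →
    ∃ c : V → ℕ, (∀ v, c v ∈ L v) ∧ IsDynamic G c

noncomputable def listChrom {V : Type*} (G : SimpleGraph V) : ℕ :=
  sInf {ℓ | Choosable G ℓ}

noncomputable def dynListChrom {V : Type*} [Fintype V] (G : SimpleGraph V) : ℕ :=
  sInf {ℓ | DynChoosable G ℓ}

open scoped Classical in
noncomputable def nedges {n : ℕ} (G : SimpleGraph (Fin n)) : ℕ :=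
  (Finset.univ.filter (fun e : Sym2 (Fin n) => e ∈ G.edgeSet)).card

noncomputable def gsize {n : ℕ} (G : SimpleGraph (Fin n)) : ℕ := n + nedges G

/-- `F` is hereditary: it is closed under taking subgraphs (up to isomorphism). -/
def Hereditary (F : ∀ n : ℕ, SimpleGraph (Fin n) → Prop) : Prop :=
  ∀ (n m : ℕ) (G : SimpleGraph (Fin n)) (H : SimpleGraph (Fin m)),
    F n G → (∃ f : Fin m ↪ Fin n, ∀ u v, H.Adj u v → G.Adj (f u) (f v)) → F m H

/-- `G` is dynamically `ℓ`-minimal in the class `F`. -/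
def DynMinimal (F : ∀ n : ℕ, SimpleGraph (Fin n) → Prop) (ℓ : ℕ)
    {n : ℕ} (G : SimpleGraph (Fin n)) : Prop :=
  F n G ∧ ¬ DynChoosable G ℓ ∧
    ∀ (m : ℕ) (H : SimpleGraph (Fin m)), F m H → gsize H < gsize G → DynChoosable H ℓ

theorem dynMinimal_min_degree_two (F : ∀ n : ℕ, SimpleGraph (Fin n) → Prop)
    (hF : Hereditary F) (ℓ : ℕ) (hl : 3 ≤ ℓ) {n : ℕ} (G : SimpleGraph (Fin n))
    (hG : DynMinimal F ℓ G) : ∀ v, 2 ≤ deg G v := by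
  classical
  obtain ⟨hGF, hGnot, hmin⟩ := hG
  intro v
  by_contra hlt
  push_neg at hlt
  apply hGnot
  have h01 : deg G v = 0 ∨ deg G v = 1 := by omega
  rcases h01 with h0 | h1
  · -- degree 0 case: delete the vertex
    rw [deg] at h0
    have hnoadj : ∀ z, ¬ G.Adj v z := by
      intro z hz
      have hz' : z ∈ Finset.univ.filter (fun u => G.Adj v u) := by
        simp [hz]
      rw [Finset.card_eq_zero.mp h0] at hz'
      exact absurd hz' (Finset.notMem_empty z)
    obtain ⟨m, rfl⟩ : ∃ m, n = m + 1 := ⟨n - 1, by have := v.isLt; omega⟩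
    set f : Fin m → Fin (m + 1) := v.succAbove with hf
    have hfinj : Function.Injective f := Fin.succAbove_right_injective
    set H : SimpleGraph (Fin m) := G.comap f with hH
    have hHF : F m H := hF _ _ G H hGF ⟨⟨f, hfinj⟩, fun a b hab => hab⟩
    have hsize : gsize H < gsize G := by
      have hedge : nedges H ≤ nedges G := by
        rw [nedges, nedges]
        apply Finset.card_le_card_of_injOn (Sym2.map f)
        · intro e he
          simp only [Finset.mem_coe, Finset.mem_filter, Finset.mem_univ, true_and] at he ⊢
          induction e using Sym2.ind with
          | _ a b => exact he
        · exact (Sym2.map.injective hfinj).injOn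
      rw [gsize, gsize]; omega
    have hHdyn := hmin m H hHF hsize
    intro L hL
    obtain ⟨c', hc'mem, hc'prop, hc'dyn⟩ := hHdyn (fun y => L (f y)) (fun y => hL (f y))
    have hLv : (L v).Nonempty := by rw [← Finset.card_pos, hL v]; omega
    obtain ⟨a0, ha0⟩ := hLv
    set c : Fin (m + 1) → ℕ :=
      fun x => if hx : x = v then a0
        else c' (Classical.choose (Fin.exists_succAbove_eq hx)) with hc
    have hcf : ∀ y, c (f y) = c' y := by
      intro y
      have hne : f y ≠ v := Fin.succAbove_ne v y
      rw [hc]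
      simp only [dif_neg hne]
      congr 1
      exact hfinj (Classical.choose_spec (Fin.exists_succAbove_eq hne))
    refine ⟨c, ?_, ?_, ?_⟩
    · intro x
      by_cases hx : x = v
      · subst hx; simpa [hc] using ha0
      · obtain ⟨y, rfl⟩ := Fin.exists_succAbove_eq hx
        rw [hcf]; exact hc'mem y
    · intro x y hxy
      have hx : x ≠ v := fun h => hnoadj y (h ▸ hxy)
      have hy : y ≠ v := fun h => hnoadj x (h ▸ hxy.symm)
      obtain ⟨x', rfl⟩ := Fin.exists_succAbove_eq hx
      obtain ⟨y', rfl⟩ := Fin.exists_succAbove_eq hy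
      rw [hcf, hcf]
      exact hc'prop x' y' hxy
    · intro x hx2
      have hx : x ≠ v := by
        rintro rfl
        rw [deg, Finset.card_eq_zero.mp h0] at hx2
        simp at hx2
      obtain ⟨x', rfl⟩ := Fin.exists_succAbove_eq hx
      have hdegle : deg G (f x') ≤ deg H x' := by
        rw [deg, deg]
        have hzv : ∀ z ∈ Finset.univ.filter (fun z => G.Adj (f x') z), z ≠ v := by
          intro z hz
          simp only [Finset.mem_filter, Finset.mem_univ, true_and] at hz
          rintro rfl
          exact hnoadj (f x') hz.symm
        set g : Fin (m + 1) → Fin m :=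
          fun z => if hz : z = v then x' else Classical.choose (Fin.exists_succAbove_eq hz) with hg
        have hfg : ∀ z, z ≠ v → f (g z) = z := by
          intro z hz
          rw [hg]
          simp only [dif_neg hz]
          exact Classical.choose_spec (Fin.exists_succAbove_eq hz)
        apply Finset.card_le_card_of_injOn g
        · intro z hz
          have hzne := hzv z hz
          simp only [Finset.mem_coe, Finset.mem_filter, Finset.mem_univ, true_and] at hz ⊢
          show G.Adj (f x') (f (g z))
          rw [hfg z hzne]
          exact hz
        · intro z1 h1 z2 h2 heq
          have e1 := hfg z1 (hzv z1 h1)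
          have e2 := hfg z2 (hzv z2 h2)
          rw [← e1, ← e2, heq]
      obtain ⟨a, b, ha, hb, hab⟩ := hc'dyn x' (le_trans hx2 hdegle)
      exact ⟨f a, f b, ha, hb, by rw [hcf, hcf]; exact hab⟩
  · -- degree 1 case: delete the edge
    rw [deg] at h1
    obtain ⟨u, hu⟩ := Finset.card_eq_one.mp h1
    have hvu : G.Adj v u := by
      have h' : u ∈ Finset.univ.filter (fun w => G.Adj v w) := by
        rw [hu]; exact Finset.mem_singleton_self u
      simpa using h'
    have hadj : ∀ z, G.Adj v z ↔ z = u := by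
      intro z
      constructor
      · intro hz
        have hz' : z ∈ Finset.univ.filter (fun w => G.Adj v w) := by simp [hz]
        rw [hu] at hz'
        simpa using hz'
      · intro hz
        rw [hz]
        exact hvu
    have huv : u ≠ v := fun h => G.irrefl (h ▸ hvu)
    set H : SimpleGraph (Fin n) := G.deleteEdges {s(v, u)} with hH
    have hHadj : ∀ a b, H.Adj a b ↔ G.Adj a b ∧ s(a, b) ≠ s(v, u) := by
      intro a b
      rw [hH, SimpleGraph.deleteEdges_adj]
      simp
    have hHF : F n H := hF _ _ G H hGF
      ⟨Function.Embedding.refl _, fun a b h => ((hHadj a b).mp h).1⟩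
    have hsize : gsize H < gsize G := by
      rw [gsize, gsize, nedges, nedges]
      have hssub : (Finset.univ.filter (fun e : Sym2 (Fin n) => e ∈ H.edgeSet)) ⊂
          (Finset.univ.filter (fun e : Sym2 (Fin n) => e ∈ G.edgeSet)) := by
        rw [Finset.ssubset_iff_of_subset]
        · refine ⟨s(v, u), ?_, ?_⟩
          · simp [SimpleGraph.mem_edgeSet, hvu]
          · simp only [Finset.mem_filter, Finset.mem_univ, true_and]
            rw [hH, SimpleGraph.edgeSet_deleteEdges]
            simp
        · intro e he
          simp only [Finset.mem_filter, Finset.mem_univ, true_and] at he ⊢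
          rw [hH, SimpleGraph.edgeSet_deleteEdges] at he
          exact he.1
      have := Finset.card_lt_card hssub
      convert Nat.add_lt_add_left this n using 4
    have hHdyn := hmin n H hHF hsize
    intro L hL
    obtain ⟨c', hmem, hprop, hdyn⟩ := hHdyn L hL
    have hHv : ∀ z, ¬ H.Adj v z := by
      intro z hz
      obtain ⟨hz1, hz2⟩ := (hHadj v z).mp hz
      have : z = u := (hadj z).mp hz1
      subst this
      exact hz2 rfl
    set N := Finset.univ.filter (fun x => G.Adj u x ∧ x ≠ v) with hN
    set w0 : Fin n := if h : N.Nonempty then h.choose else u with hw0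
    have hpick : (L v \ {c' u, c' w0}).Nonempty := by
      rw [← Finset.card_pos]
      have h1' : (L v).card ≤ (L v \ {c' u, c' w0}).card + ({c' u, c' w0} : Finset ℕ).card :=
        Finset.card_le_card_sdiff_add_card
      have h2' : ({c' u, c' w0} : Finset ℕ).card ≤ 2 := by
        apply le_trans (Finset.card_insert_le _ _)
        simp
      rw [hL v] at h1'
      omega
    obtain ⟨a0, ha0⟩ := hpick
    obtain ⟨ha0L, ha0S⟩ := Finset.mem_sdiff.mp ha0
    have ha0u : a0 ≠ c' u := by intro h; exact ha0S (by simp [h])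
    have ha0w : a0 ≠ c' w0 := by intro h; exact ha0S (by simp [h])
    set c : Fin n → ℕ := fun x => if x = v then a0 else c' x with hc
    have hcne : ∀ x, x ≠ v → c x = c' x := fun x hx => if_neg hx
    have hcv : c v = a0 := if_pos rfl
    refine ⟨c, ?_, ?_, ?_⟩
    · intro x
      by_cases hx : x = v
      · subst hx; rw [hcv]; exact ha0L
      · rw [hcne x hx]; exact hmem x
    · intro x y hxy
      by_cases hx : x = v
      · have hyu : y = u := (hadj y).mp (hx ▸ hxy)
        have hyv : y ≠ v := by rw [hyu]; exact huv
        rw [hx, hcv, hcne y hyv, hyu]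
        exact ha0u
      · by_cases hy : y = v
        · have hxu : x = u := (hadj x).mp (hy ▸ hxy.symm)
          rw [hy, hcv, hcne x hx, hxu]
          exact fun h => ha0u h.symm
        · have hH' : H.Adj x y := by
            rw [hHadj]
            refine ⟨hxy, ?_⟩
            intro heq
            rw [Sym2.eq_iff] at heq
            rcases heq with ⟨h1, h2⟩ | ⟨h1, h2⟩
            · exact hx h1
            · exact hy h2
          rw [hcne x hx, hcne y hy]
          exact hprop x y hH'
    · intro x hx2
      by_cases hx : x = v
      · subst hx; rw [deg, h1] at hx2; omega
      · by_cases hxu : x = u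
        · subst hxu
          have hNne : N.Nonempty := by
            by_contra hNe
            have hsub : Finset.univ.filter (fun z => G.Adj x z) ⊆ {v} := by
              intro z hz
              simp only [Finset.mem_filter, Finset.mem_univ, true_and] at hz
              by_contra hzv
              simp only [Finset.mem_singleton] at hzv
              exact hNe ⟨z, by simp [hN, hz, hzv]⟩
            have := Finset.card_le_card hsub
            rw [deg] at hx2
            simp at this
            omega
          have hw0N : w0 ∈ N := by
            rw [hw0, dif_pos hNne]
            exact hNne.choose_spec
          rw [hN] at hw0N
          simp only [Finset.mem_filter, Finset.mem_univ, true_and] at hw0N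
          obtain ⟨hw0adj, hw0v⟩ := hw0N
          refine ⟨v, w0, hvu.symm, hw0adj, ?_⟩
          rw [hcv, hcne w0 hw0v]
          exact ha0w
        · have hdegeq : (Finset.univ.filter (fun z => H.Adj x z)) =
              (Finset.univ.filter (fun z => G.Adj x z)) := by
            ext z
            simp only [Finset.mem_filter, Finset.mem_univ, true_and]
            rw [hHadj]
            constructor
            · exact fun h => h.1
            · intro h
              refine ⟨h, ?_⟩
              intro heq
              rw [Sym2.eq_iff] at heq
              rcases heq with ⟨h1, h2⟩ | ⟨h1, h2⟩
              · exact hx h1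
              · exact hxu h1
          have hdH : 2 ≤ deg H x := by
            simp only [deg] at hx2 ⊢; convert hx2 using 2; convert hdegeq
          obtain ⟨a, b, ha, hb, hab⟩ := hdyn x hdH
          have hav : a ≠ v := by rintro rfl; exact hHv x ha.symm
          have hbv : b ≠ v := by rintro rfl; exact hHv x hb.symm
          refine ⟨a, b, ((hHadj x a).mp ha).1, ((hHadj x b).mp hb).1, ?_⟩
          rw [hcne a hav, hcne b hbv]
          exact hab
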